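/- The number of non-crossing multigraphs on vertices 1,...,m with degree sequence (d_1,...,d_m) equals the multiplicity of the trivial representation in ρ_{d_1}⊗...⊗ρ_{d_m}, i.e. equals the coefficient c_d^{(0)} defined by Π_{i=1}^m(q^{d_i}+...+q^{−d_i}) = Σ_k c_d^{(k)}(q^k+q^{k−2}+...+q^{−k}). -/

import Mathlib

open LaurentPolynomial Finset

/-- The character of the irreducible SL(2)-representation ρ_d:
q^d + q^{d-2} + ... + q^{-d}. -/
noncomputable def chRho (k : ℕ) : LaurentPolynomial ℤ :=
  ∑ i ∈ Finset.range (k + 1), T ((k : ℤ) - 2 * i)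

/-- Number of non-crossing multigraphs on Fin m with degree sequence d (see
STATEMENT 11 for the encoding). -/
noncomputable def ncCount (m : ℕ) (d : Fin m → ℕ) : ℕ :=
  Nat.card {A : Fin m → Fin m → ℕ //
    (∀ i j, A i j = A j i) ∧ (∀ i, A i i = 0) ∧
    (∀ a b c e : Fin m, a < b → b < c → c < e → A a c = 0 ∨ A b e = 0) ∧
    ∀ i, ∑ j, A i j = d i}

lemma mul_chRho_apply (P : LaurentPolynomial ℤ) (e : ℕ) (n : ℤ) :
    (P * chRho e).coeff n = ∑ i ∈ Finset.range (e + 1), P.coeff (n - ((e : ℤ) - 2 * i)) := by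
  rw [chRho, Finset.mul_sum]
  rw [AddMonoidAlgebra.coeff_sum, Finsupp.finset_sum_apply]
  refine Finset.sum_congr rfl fun i _ => ?_
  have hT : (T ((e:ℤ) - 2*i) : LaurentPolynomial ℤ) = AddMonoidAlgebra.single ((e:ℤ)-2*i) 1 := rfl
  rw [hT, AddMonoidAlgebra.coeff_mul_single_apply, mul_one, ← sub_eq_add_neg]

lemma invert_chRho (e : ℕ) : invert (chRho e) = chRho e := by
  rw [chRho, map_sum]
  simp only [invert_T]
  rw [← Finset.sum_range_reflect (fun i => T (-((e:ℤ) - 2 * i))) (e+1)]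
  refine Finset.sum_congr rfl fun j hj => ?_
  simp only [Finset.mem_range] at hj
  congr 1
  have hj' : j ≤ e := by omega
  push_cast [Nat.cast_sub hj']
  ring

lemma symm_prod_chRho (m : ℕ) (d : ℕ → ℕ) (n : ℤ) :
    (∏ i ∈ Finset.range m, chRho (d i)).coeff (-n) = (∏ i ∈ Finset.range m, chRho (d i)).coeff n := by
  have h : invert (∏ i ∈ Finset.range m, chRho (d i)) = ∏ i ∈ Finset.range m, chRho (d i) := by
    rw [map_prod]
    exact Finset.prod_congr rfl fun i _ => invert_chRho (d i)
  calc (∏ i ∈ Finset.range m, chRho (d i)).coeff (-n)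
      = (invert (∏ i ∈ Finset.range m, chRho (d i))).coeff n := (invert_apply _ n).symm
    _ = _ := by rw [h]

lemma psi_step (P : LaurentPolynomial ℤ) (hsymm : ∀ n : ℤ, P.coeff (-n) = P.coeff n) (e k : ℕ) :
    (P * chRho e).coeff (k : ℤ) - (P * chRho e).coeff ((k : ℤ) + 2)
      = ∑ l ∈ Finset.range (e + 1), (if e ≤ k + l then
          (P.coeff ((k + 2 * l - e : ℕ) : ℤ) - P.coeff (((k + 2 * l - e : ℕ) : ℤ) + 2)) else 0) := by
  have hL : (P * chRho e).coeff (k : ℤ) - (P * chRho e).coeff ((k : ℤ) + 2)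
      = P.coeff ((k : ℤ) - e) - P.coeff ((k : ℤ) + e + 2) := by
    rw [mul_chRho_apply, mul_chRho_apply, ← Finset.sum_sub_distrib]
    have : ∀ i ∈ Finset.range (e + 1),
        P.coeff ((k:ℤ) - ((e:ℤ) - 2*i)) - P.coeff ((k:ℤ) + 2 - ((e:ℤ) - 2*i))
          = (fun i : ℕ => P.coeff ((k:ℤ) - e + 2*i)) i - (fun i : ℕ => P.coeff ((k:ℤ) - e + 2*i)) (i+1) := by
      intro i _
      simp only []
      push_cast
      ring_nf
    rw [Finset.sum_congr rfl this, Finset.sum_range_sub' (fun i : ℕ => P.coeff ((k:ℤ) - e + 2*i)) (e+1)]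
    push_cast
    ring_nf
  rw [hL]
  set l₀ : ℕ := e - k with hl₀
  have hle : l₀ ≤ e + 1 := by omega
  have hsplit : ∑ l ∈ Finset.range (e + 1), (if e ≤ k + l then
          (P.coeff ((k + 2 * l - e : ℕ) : ℤ) - P.coeff (((k + 2 * l - e : ℕ) : ℤ) + 2)) else 0)
      = ∑ l ∈ Finset.Ico l₀ (e+1), (P.coeff (((k:ℤ) + 2*l - e)) - P.coeff (((k:ℤ) + 2*l - e) + 2)) := by
    rw [Finset.range_eq_Ico, ← Finset.sum_Ico_consecutive _ (Nat.zero_le l₀) hle]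
    have h1 : ∑ l ∈ Finset.Ico 0 l₀, (if e ≤ k + l then
          (P.coeff ((k + 2 * l - e : ℕ) : ℤ) - P.coeff (((k + 2 * l - e : ℕ) : ℤ) + 2)) else 0) = 0 := by
      apply Finset.sum_eq_zero
      intro l hl
      simp only [Finset.mem_Ico] at hl
      rw [if_neg (by omega)]
    rw [h1, zero_add]
    refine Finset.sum_congr rfl fun l hl => ?_
    simp only [Finset.mem_Ico] at hl
    rw [if_pos (by omega)]
    have : ((k + 2 * l - e : ℕ) : ℤ) = (k:ℤ) + 2*l - e := by
      have : e ≤ k + 2*l := by omega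
      push_cast [Nat.cast_sub this]
      ring
    rw [this]
  rw [hsplit]
  have htel : ∑ l ∈ Finset.Ico l₀ (e+1), (P.coeff (((k:ℤ) + 2*l - e)) - P.coeff (((k:ℤ) + 2*l - e) + 2))
      = P.coeff ((k:ℤ) + 2*l₀ - e) - P.coeff ((k:ℤ) + e + 2) := by
    rw [Finset.sum_Ico_eq_sum_range]
    have : ∀ i ∈ Finset.range (e + 1 - l₀),
        (P.coeff (((k:ℤ) + 2*((l₀ + i : ℕ) : ℤ) - e)) - P.coeff (((k:ℤ) + 2*((l₀ + i : ℕ) : ℤ) - e) + 2))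
        = (fun i : ℕ => P.coeff ((k:ℤ) + 2*l₀ - e + 2*i)) i - (fun i : ℕ => P.coeff ((k:ℤ) + 2*l₀ - e + 2*i)) (i+1) := by
      intro i _
      simp only []
      push_cast
      ring_nf
    rw [Finset.sum_congr rfl this, Finset.sum_range_sub' (fun i : ℕ => P.coeff ((k:ℤ) + 2*l₀ - e + 2*i)) _]
    have h2 : ((e + 1 - l₀ : ℕ) : ℤ) = (e:ℤ) + 1 - l₀ := by
      push_cast [Nat.cast_sub (by omega : l₀ ≤ e + 1)]
      ring
    congr 2
    · push_cast; ring
    · rw [h2]; ring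
  rw [htel]
  have harg : P.coeff ((k:ℤ) + 2*(l₀:ℤ) - e) = P.coeff ((k:ℤ) - e) := by
    by_cases h : e ≤ k
    · have h0 : l₀ = 0 := by omega
      rw [h0]; norm_num
    · have hek : (l₀ : ℤ) = (e:ℤ) - k := by
        rw [hl₀]; push_cast [Nat.cast_sub (by omega : k ≤ e)]; ring
      have harg2 : (k:ℤ) + 2*(l₀:ℤ) - e = -((k:ℤ) - e) := by rw [hek]; ring
      rw [harg2, hsymm]
  rw [harg]


def NCfun (A : ℕ → ℕ → ℕ) : Prop :=
  ∀ a b c e : ℕ, a < b → b < c → c < e → A a c = 0 ∨ A b e = 0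

def IsG (m : ℕ) (d : ℕ → ℕ) (k : ℕ) (A : ℕ → ℕ → ℕ) : Prop :=
  (∀ i j, A i j = A j i) ∧ (∀ i, A i i = 0) ∧ NCfun A ∧
  (∀ i j, m < j → A i j = 0) ∧
  (∀ i, i < m → (∑ j ∈ Finset.range (m+1), A i j) = d i) ∧
  ((∑ j ∈ Finset.range (m+1), A m j) = k)

noncomputable def gcount (m : ℕ) (d : ℕ → ℕ) (k : ℕ) : ℕ :=
  Nat.card {A : ℕ → ℕ → ℕ // IsG m d k A}

lemma IsG.entry_le {m : ℕ} {d : ℕ → ℕ} {k : ℕ} {A : ℕ → ℕ → ℕ} (h : IsG m d k A)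
    (i j : ℕ) : A i j ≤ (∑ t ∈ Finset.range m, d t) + k := by
  obtain ⟨hs, hdiag, hnc, hsupp, hdeg, hdm⟩ := h
  by_cases hj : m < j
  · rw [hsupp i j hj]; exact Nat.zero_le _
  by_cases hi : m < i
  · rw [hs, hsupp j i hi]; exact Nat.zero_le _
  have h1 : A i j ≤ ∑ j' ∈ Finset.range (m+1), A i j' :=
    Finset.single_le_sum (fun _ _ => Nat.zero_le _) (Finset.mem_range.mpr (by omega))
  rcases Nat.lt_or_ge i m with him | him
  · rw [hdeg i him] at h1
    have h2 : d i ≤ ∑ t ∈ Finset.range m, d t :=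
      Finset.single_le_sum (fun _ _ => Nat.zero_le _) (Finset.mem_range.mpr him)
    omega
  · have : i = m := by omega
    subst this
    rw [hdm] at h1
    omega

instance gFinite (m : ℕ) (d : ℕ → ℕ) (k : ℕ) : Finite {A : ℕ → ℕ → ℕ // IsG m d k A} := by
  set Bd := (∑ t ∈ Finset.range m, d t) + k with hBd
  apply Finite.of_injective (fun A : {A : ℕ → ℕ → ℕ // IsG m d k A} =>
    (fun i j : Fin (m+1) => (⟨A.1 i j, Nat.lt_succ_of_le (A.2.entry_le i j)⟩ : Fin (Bd+1))))
  intro A B hAB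
  apply Subtype.ext
  funext i j
  obtain ⟨hsA, _, _, hsuppA, _, _⟩ := A.2
  obtain ⟨hsB, _, _, hsuppB, _, _⟩ := B.2
  by_cases hj : m < j
  · rw [hsuppA i j hj, hsuppB i j hj]
  by_cases hi : m < i
  · rw [hsA, hsuppA j i hi, hsB, hsuppB j i hi]
  have := congrFun (congrFun hAB ⟨i, by omega⟩) ⟨j, by omega⟩
  simpa [Fin.ext_iff] using this

lemma gcount_zero (d : ℕ → ℕ) (k : ℕ) : gcount 0 d k = if k = 0 then 1 else 0 := by
  rcases eq_or_ne k 0 with hk | hk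
  · subst hk
    rw [if_pos rfl, gcount]
    have hne : Nonempty {A : ℕ → ℕ → ℕ // IsG 0 d 0 A} := by
      refine ⟨⟨fun _ _ => 0, ?_⟩⟩
      refine ⟨fun _ _ => rfl, fun _ => rfl, fun _ _ _ _ _ _ _ => Or.inl rfl,
        fun _ _ _ => rfl, fun i hi => by omega, by simp⟩
    have hsub : Subsingleton {A : ℕ → ℕ → ℕ // IsG 0 d 0 A} := by
      constructor
      rintro ⟨A, hsA, hdA, _, hsuppA, _, hdmA⟩ ⟨B, hsB, hdB, _, hsuppB, _, hdmB⟩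
      have hzero : ∀ (C : ℕ → ℕ → ℕ), (∀ i j, C i j = C j i) → (∀ i, C i i = 0) →
          (∀ i j, 0 < j → C i j = 0) → ∀ i j, C i j = 0 := by
        intro C hs hd hsupp i j
        rcases Nat.eq_zero_or_pos j with hj | hj
        · subst hj
          rcases Nat.eq_zero_or_pos i with hi | hi
          · subst hi; exact hd 0
          · rw [hs]; exact hsupp 0 i hi
        · exact hsupp i j hj
      apply Subtype.ext
      funext i j
      show A i j = B i j
      rw [hzero A hsA hdA hsuppA i j, hzero B hsB hdB hsuppB i j]
    exact Nat.card_unique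
  · rw [if_neg hk, gcount]
    rw [Nat.card_eq_zero]
    left
    constructor
    rintro ⟨A, hsA, hdA, _, hsuppA, _, hdmA⟩
    apply hk
    rw [← hdmA]
    simp [hdA 0]

def thrX (m l : ℕ) (c : ℕ → ℕ) : ℕ → ℕ :=
  fun i => min (c i) (l - ∑ j ∈ Finset.Ico (i+1) m, c j)

lemma thrX_le (m l : ℕ) (c : ℕ → ℕ) (i : ℕ) : thrX m l c i ≤ c i := min_le_left _ _

lemma thrX_thr (m l : ℕ) (c : ℕ → ℕ) {i j : ℕ} (hij : i < j) (hjm : j < m)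
    (hx : 0 < thrX m l c i) : thrX m l c j = c j := by
  have h1 : 0 < l - ∑ t ∈ Finset.Ico (i+1) m, c t := lt_of_lt_of_le hx (min_le_right _ _)
  have h2 : ∑ t ∈ Finset.Ico (i+1) m, c t
      = ∑ t ∈ Finset.Ico (i+1) (j+1), c t + ∑ t ∈ Finset.Ico (j+1) m, c t :=
    (Finset.sum_Ico_consecutive c (by omega) (by omega)).symm
  have h3 : c j ≤ ∑ t ∈ Finset.Ico (i+1) (j+1), c t :=
    Finset.single_le_sum (fun _ _ => Nat.zero_le _) (Finset.mem_Ico.mpr ⟨by omega, by omega⟩)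
  simp only [thrX]
  omega

lemma thrX_sum_Ico (m l : ℕ) (c : ℕ → ℕ) :
    ∀ n t, t + n = m →
      ∑ i ∈ Finset.Ico t m, thrX m l c i = min l (∑ i ∈ Finset.Ico t m, c i) := by
  intro n
  induction n with
  | zero =>
    intro t ht
    have : Finset.Ico t m = ∅ := by rw [Finset.Ico_eq_empty_iff]; omega
    simp [this]
  | succ n ih =>
    intro t ht
    have htm : t < m := by omega
    have IH := ih (t+1) (by omega)
    rw [Finset.sum_eq_sum_Ico_succ_bot htm (thrX m l c),
        Finset.sum_eq_sum_Ico_succ_bot htm c, IH]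
    have hx : thrX m l c t = min (c t) (l - ∑ j ∈ Finset.Ico (t+1) m, c j) := rfl
    omega

lemma thrX_sum (m l : ℕ) (c : ℕ → ℕ) (hl : l ≤ ∑ i ∈ Finset.range m, c i) :
    ∑ i ∈ Finset.range m, thrX m l c i = l := by
  have := thrX_sum_Ico m l c m 0 (by omega)
  rw [Finset.range_eq_Ico]
  rw [Finset.range_eq_Ico] at hl
  omega

/-- characterization of any "threshold" vector: partial sums from `t` equal `min l S_t`. -/
lemma thr_sum_Ico (m l : ℕ) (x c : ℕ → ℕ) (hxc : ∀ i, i < m → x i ≤ c i)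
    (hsum : ∑ i ∈ Finset.range m, x i = l)
    (thr : ∀ i j, i < j → j < m → 0 < x i → x j = c j) :
    ∀ n t, t + n = m →
      ∑ i ∈ Finset.Ico t m, x i = min l (∑ i ∈ Finset.Ico t m, c i) := by
  intro n
  induction n with
  | zero =>
    intro t ht
    have : Finset.Ico t m = ∅ := by rw [Finset.Ico_eq_empty_iff]; omega
    simp [this]
  | succ n ih =>
    intro t ht
    have htm : t < m := by omega
    have IH := ih (t+1) (by omega)
    rw [Finset.sum_eq_sum_Ico_succ_bot htm x, Finset.sum_eq_sum_Ico_succ_bot htm c]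
    have hsplit : ∑ i ∈ Finset.range t, x i + ∑ i ∈ Finset.Ico t m, x i = l := by
      rw [← hsum, Finset.range_eq_Ico, Finset.range_eq_Ico]
      exact Finset.sum_Ico_consecutive x (Nat.zero_le t) (le_of_lt htm)
    rw [Finset.sum_eq_sum_Ico_succ_bot htm x] at hsplit
    by_cases hP : ∑ i ∈ Finset.range t, x i = 0
    · have hTS : ∑ i ∈ Finset.Ico (t+1) m, x i ≤ ∑ i ∈ Finset.Ico (t+1) m, c i :=
        Finset.sum_le_sum (fun i hi => hxc i (Finset.mem_Ico.mp hi).2)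
      have hxt : x t ≤ c t := hxc t htm
      omega
    · have hex : ∃ j, j < t ∧ 0 < x j := by
        by_contra h
        push_neg at h
        exact hP (Finset.sum_eq_zero fun j hj => by
          have := h j (Finset.mem_range.mp hj); omega)
      obtain ⟨j, hjt, hj⟩ := hex
      have hall : ∀ i, t ≤ i → i < m → x i = c i := fun i h1 h2 => thr j i (by omega) h2 hj
      have hxt : x t = c t := hall t le_rfl htm
      have hTSeq : ∑ i ∈ Finset.Ico (t+1) m, x i = ∑ i ∈ Finset.Ico (t+1) m, c i :=
        Finset.sum_congr rfl (fun i hi => by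
          have := Finset.mem_Ico.mp hi; exact hall i (by omega) this.2)
      omega

/-- any threshold vector with the right total equals `thrX`. -/
lemma thr_unique (m l : ℕ) (x c : ℕ → ℕ) (hxc : ∀ i, i < m → x i ≤ c i)
    (hsum : ∑ i ∈ Finset.range m, x i = l)
    (thr : ∀ i j, i < j → j < m → 0 < x i → x j = c j)
    {t : ℕ} (htm : t < m) : x t = thrX m l c t := by
  have h1 := thr_sum_Ico m l x c hxc hsum thr (m - t) t (by omega)
  have h2 := thr_sum_Ico m l x c hxc hsum thr (m - (t+1)) (t+1) (by omega)
  have h3 := thrX_sum_Ico m l c (m - t) t (by omega)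
  have h4 := thrX_sum_Ico m l c (m - (t+1)) (t+1) (by omega)
  rw [Finset.sum_eq_sum_Ico_succ_bot htm x] at h1
  rw [Finset.sum_eq_sum_Ico_succ_bot htm (thrX m l c)] at h3
  omega

def mergeA (m : ℕ) (A : ℕ → ℕ → ℕ) : ℕ → ℕ → ℕ := fun i j =>
  if i < m ∧ j < m then A i j
  else if i < m ∧ j = m then A i m + A i (m+1)
  else if i = m ∧ j < m then A m j + A (m+1) j
  else 0

lemma mergeA_lt {m : ℕ} (A : ℕ → ℕ → ℕ) {i j : ℕ} (hi : i < m) (hj : j < m) :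
    mergeA m A i j = A i j := by
  simp only [mergeA, if_pos (And.intro hi hj)]

lemma mergeA_im {m : ℕ} (A : ℕ → ℕ → ℕ) {i : ℕ} (hi : i < m) :
    mergeA m A i m = A i m + A i (m+1) := by
  simp only [mergeA]
  rw [if_neg (by omega), if_pos ⟨hi, by trivial⟩]

lemma mergeA_mi {m : ℕ} (A : ℕ → ℕ → ℕ) {j : ℕ} (hj : j < m) :
    mergeA m A m j = A m j + A (m+1) j := by
  simp only [mergeA]
  rw [if_neg (by omega), if_neg (by omega), if_pos ⟨by trivial, hj⟩]

lemma mergeA_zero {m : ℕ} (A : ℕ → ℕ → ℕ) {i j : ℕ}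
    (h : (i = m ∧ j = m) ∨ m < i ∨ m < j) : mergeA m A i j = 0 := by
  simp only [mergeA]
  rw [if_neg (by omega), if_neg (by omega), if_neg (by omega)]

def splitA (m l r : ℕ) (B : ℕ → ℕ → ℕ) : ℕ → ℕ → ℕ := fun i j =>
  if i < m ∧ j < m then B i j
  else if i < m ∧ j = m then thrX m l (fun t => B t m) i
  else if i = m ∧ j < m then thrX m l (fun t => B t m) j
  else if i < m ∧ j = m+1 then B i m - thrX m l (fun t => B t m) i
  else if i = m+1 ∧ j < m then B j m - thrX m l (fun t => B t m) j
  else if i = m ∧ j = m+1 then r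
  else if i = m+1 ∧ j = m then r
  else 0

section splitEval

variable {m l r : ℕ} (B : ℕ → ℕ → ℕ) {i j : ℕ}

lemma splitA_lt (hi : i < m) (hj : j < m) : splitA m l r B i j = B i j := by
  simp only [splitA, if_pos (And.intro hi hj)]

lemma splitA_im (hi : i < m) : splitA m l r B i m = thrX m l (fun t => B t m) i := by
  simp only [splitA]
  rw [if_neg (by omega), if_pos ⟨hi, by trivial⟩]

lemma splitA_mi (hj : j < m) : splitA m l r B m j = thrX m l (fun t => B t m) j := by
  simp only [splitA]
  rw [if_neg (by omega), if_neg (by omega), if_pos ⟨by trivial, hj⟩]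

lemma splitA_iv (hi : i < m) :
    splitA m l r B i (m+1) = B i m - thrX m l (fun t => B t m) i := by
  simp only [splitA]
  rw [if_neg (by omega), if_neg (by omega), if_neg (by omega), if_pos ⟨hi, by trivial⟩]

lemma splitA_vi (hj : j < m) :
    splitA m l r B (m+1) j = B j m - thrX m l (fun t => B t m) j := by
  simp only [splitA]
  rw [if_neg (by omega), if_neg (by omega), if_neg (by omega), if_neg (by omega),
    if_pos ⟨by trivial, hj⟩]

lemma splitA_mv : splitA m l r B m (m+1) = r := by
  simp only [splitA]
  rw [if_neg (by omega), if_neg (by omega), if_neg (by omega), if_neg (by omega),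
    if_neg (by omega), if_pos ⟨by trivial, by trivial⟩]

lemma splitA_vm : splitA m l r B (m+1) m = r := by
  simp only [splitA]
  rw [if_neg (by omega), if_neg (by omega), if_neg (by omega), if_neg (by omega),
    if_neg (by omega), if_neg (by omega), if_pos ⟨by trivial, by trivial⟩]

lemma splitA_zero (h : (i = m ∧ j = m) ∨ (i = m+1 ∧ j = m+1) ∨ m+1 < i ∨ m+1 < j) :
    splitA m l r B i j = 0 := by
  simp only [splitA]
  rw [if_neg (by omega), if_neg (by omega), if_neg (by omega), if_neg (by omega),
    if_neg (by omega), if_neg (by omega), if_neg (by omega)]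

end splitEval

lemma merge_isG {m : ℕ} {d : ℕ → ℕ} {k : ℕ} {A : ℕ → ℕ → ℕ} (hA : IsG (m+1) d k A) :
    (∑ j ∈ Finset.range m, A m j) + A m (m+1) = d m ∧
    A m (m+1) ≤ k ∧
    IsG m d (k + 2 * (∑ j ∈ Finset.range m, A m j) - d m) (mergeA m A) := by
  obtain ⟨hs, hd, hnc, hsupp, hdeg, hdm⟩ := hA
  have f1 : (∑ j ∈ Finset.range m, A m j) + A m (m+1) = d m := by
    have h := hdeg m (by omega)
    rw [Finset.sum_range_succ, Finset.sum_range_succ] at h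
    rw [hd m] at h
    omega
  have f2' : A (m+1) m ≤ k := by
    rw [← hdm]
    exact Finset.single_le_sum (fun _ _ => Nat.zero_le _) (Finset.mem_range.mpr (by omega))
  have f2 : A m (m+1) ≤ k := by rw [hs]; exact f2'
  have f3 : (∑ j ∈ Finset.range m, A (m+1) j) + A m (m+1) = k := by
    rw [Finset.sum_range_succ, Finset.sum_range_succ] at hdm
    rw [hd (m+1), ← hs m (m+1)] at hdm
    omega
  refine ⟨f1, f2, ?_, ?_, ?_, ?_, ?_, ?_⟩
  · -- symmetric
    intro i j
    by_cases hi : i < m <;> by_cases hj : j < m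
    · rw [mergeA_lt A hi hj, mergeA_lt A hj hi, hs]
    · by_cases hjm : j = m
      · rw [hjm, mergeA_im A hi, mergeA_mi A hi, hs i m, hs i (m+1)]
      · rw [mergeA_zero A (by omega), mergeA_zero A (by omega)]
    · by_cases him : i = m
      · rw [him, mergeA_im A hj, mergeA_mi A hj, hs j m, hs j (m+1)]
      · rw [mergeA_zero A (by omega), mergeA_zero A (by omega)]
    · rw [mergeA_zero A (by omega), mergeA_zero A (by omega)]
  · -- diagonal
    intro i
    by_cases hi : i < m
    · rw [mergeA_lt A hi hi]; exact hd i
    · exact mergeA_zero A (by omega)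
  · -- non-crossing
    intro a b c e' hab hbc hce
    rcases Nat.lt_or_ge e' m with he' | he'
    · rw [mergeA_lt A (by omega) (by omega), mergeA_lt A (by omega) (by omega)]
      exact hnc a b c e' hab hbc hce
    rcases Nat.lt_or_ge m e' with he'' | he''
    · right; exact mergeA_zero A (by omega)
    have hem : e' = m := by omega
    rw [hem, mergeA_lt A (by omega) (by omega), mergeA_im A (by omega)]
    rcases hnc a b c m hab hbc (by omega) with h | h
    · left; exact h
    rcases hnc a b c (m+1) hab hbc (by omega) with h2 | h2
    · left; exact h2
    · right; omega
  · -- support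
    intro i j hj
    exact mergeA_zero A (by omega)
  · -- degrees
    intro i hi
    rw [Finset.sum_range_succ, mergeA_im A hi]
    have hcon : ∑ j ∈ Finset.range m, mergeA m A i j = ∑ j ∈ Finset.range m, A i j :=
      Finset.sum_congr rfl fun j hj => mergeA_lt A hi (Finset.mem_range.mp hj)
    rw [hcon]
    have hrow := hdeg i (by omega)
    rw [Finset.sum_range_succ, Finset.sum_range_succ] at hrow
    omega
  · -- virtual row
    rw [Finset.sum_range_succ, mergeA_zero A (by omega)]
    have hcon : ∑ j ∈ Finset.range m, mergeA m A m j
        = ∑ j ∈ Finset.range m, (A m j + A (m+1) j) :=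
      Finset.sum_congr rfl fun j hj => mergeA_mi A (Finset.mem_range.mp hj)
    rw [hcon, Finset.sum_add_distrib]
    omega

lemma split_isG {m : ℕ} {d : ℕ → ℕ} {k l : ℕ} {B : ℕ → ℕ → ℕ}
    (hB : IsG m d (k + 2 * l - d m) B) (hl : l ≤ d m) (hlk : d m ≤ k + l) :
    IsG (m+1) d k (splitA m l (d m - l) B) := by
  obtain ⟨hs, hd, hnc, hsupp, hdeg, hdm⟩ := hB
  set a := k + 2 * l - d m with ha
  set r : ℕ := d m - l with hr
  have hc_sum : ∑ t ∈ Finset.range m, B t m = a := by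
    rw [Finset.sum_range_succ] at hdm
    rw [hd m, add_zero] at hdm
    rw [← hdm]
    exact Finset.sum_congr rfl fun j _ => (hs j m).symm ▸ rfl
  have hla : l ≤ a := by omega
  have hx_sum : ∑ t ∈ Finset.range m, thrX m l (fun t => B t m) t = l :=
    thrX_sum m l (fun t => B t m)
      ((by omega : l ≤ ∑ t ∈ Finset.range m, B t m) : _)
  have hx_le : ∀ i, thrX m l (fun t => B t m) i ≤ B i m := fun i => thrX_le m l _ i
  refine ⟨?_, ?_, ?_, ?_, ?_, ?_⟩
  · -- symmetric
    intro i j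
    by_cases hi : i < m <;> by_cases hj : j < m
    · rw [splitA_lt B hi hj, splitA_lt B hj hi, hs]
    · by_cases hjm : j = m
      · rw [hjm, splitA_im B hi, splitA_mi B hi]
      · by_cases hjv : j = m + 1
        · rw [hjv, splitA_iv B hi, splitA_vi B hi]
        · rw [splitA_zero B (by omega), splitA_zero B (by omega)]
    · by_cases him : i = m
      · rw [him, splitA_im B hj, splitA_mi B hj]
      · by_cases hiv : i = m + 1
        · rw [hiv, splitA_iv B hj, splitA_vi B hj]
        · rw [splitA_zero B (by omega), splitA_zero B (by omega)]
    · by_cases him : i = m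
      · by_cases hjv : j = m + 1
        · rw [him, hjv, splitA_mv B, splitA_vm B]
        · rw [splitA_zero B (by omega), splitA_zero B (by omega)]
      · by_cases hiv : i = m + 1
        · by_cases hjm : j = m
          · rw [hiv, hjm, splitA_mv B, splitA_vm B]
          · rw [splitA_zero B (by omega), splitA_zero B (by omega)]
        · rw [splitA_zero B (by omega), splitA_zero B (by omega)]
  · -- diagonal
    intro i
    by_cases hi : i < m
    · rw [splitA_lt B hi hi]; exact hd i
    · exact splitA_zero B (by omega)
  · -- non-crossing
    intro p q u v hpq hqu huv
    by_contra hcon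
    push_neg at hcon
    obtain ⟨h1, h2⟩ := hcon
    rcases Nat.lt_or_ge (m+1) v with hv | hv
    · exact h2 (splitA_zero B (by omega))
    rcases Nat.lt_or_ge v m with hvm | hvm
    · rw [splitA_lt B (by omega) (by omega)] at h1
      rw [splitA_lt B (by omega) (by omega)] at h2
      rcases hnc p q u v hpq hqu huv with h | h
      · exact h1 h
      · exact h2 h
    rcases Nat.eq_or_lt_of_le hvm with hvm' | hvm'
    · -- v = m, so u < m
      rw [splitA_lt B (by omega) (by omega)] at h1
      rw [← hvm', splitA_im B (by omega)] at h2
      have hq : B q m ≠ 0 := by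
        intro h0
        apply h2
        have h3 := hx_le q
        omega
      rcases hnc p q u m hpq hqu (by omega) with h | h
      · exact h1 h
      · exact hq h
    · -- v = m + 1
      have hvv : v = m + 1 := by omega
      rcases Nat.lt_or_ge u m with hum | hum
      · rw [splitA_lt B (by omega) (by omega)] at h1
        rw [hvv, splitA_iv B (by omega)] at h2
        have hq : B q m ≠ 0 := by
          intro h0
          apply h2
          have h3 := hx_le q
          omega
        rcases hnc p q u m hpq hqu (by omega) with h | h
        · exact h1 h
        · exact hq h
      · -- u = m
        have hum' : u = m := by omega
        rw [hum', splitA_im B (by omega)] at h1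
        rw [hvv, splitA_iv B (by omega)] at h2
        have hthr : thrX m l (fun t => B t m) q = B q m :=
          thrX_thr m l (fun t => B t m) (show p < q by omega) (show q < m by omega)
            (Nat.pos_of_ne_zero h1)
        apply h2
        omega
  · -- support
    intro i j hj
    exact splitA_zero B (by omega)
  · -- degrees
    intro i hi
    rcases Nat.lt_or_ge i m with him | him
    · rw [Finset.sum_range_succ, Finset.sum_range_succ, splitA_iv B him, splitA_im B him]
      have hcon : ∑ j ∈ Finset.range m, splitA m l r B i j = ∑ j ∈ Finset.range m, B i j :=
        Finset.sum_congr rfl fun j hj => splitA_lt B him (Finset.mem_range.mp hj)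
      rw [hcon]
      have hrow := hdeg i him
      rw [Finset.sum_range_succ] at hrow
      have h3 := hx_le i
      omega
    · -- i = m
      have him' : i = m := by omega
      rw [him', Finset.sum_range_succ, Finset.sum_range_succ, splitA_mv B,
        splitA_zero B (by omega)]
      have hcon : ∑ j ∈ Finset.range m, splitA m l r B m j
          = ∑ j ∈ Finset.range m, thrX m l (fun t => B t m) j :=
        Finset.sum_congr rfl fun j hj => splitA_mi B (Finset.mem_range.mp hj)
      rw [hcon, hx_sum]
      omega
  · -- virtual row
    rw [Finset.sum_range_succ, Finset.sum_range_succ, splitA_vm B,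
      splitA_zero B (by omega)]
    have hcon : ∑ j ∈ Finset.range m, splitA m l r B (m+1) j
        = ∑ j ∈ Finset.range m, (B j m - thrX m l (fun t => B t m) j) :=
      Finset.sum_congr rfl fun j hj => splitA_vi B (Finset.mem_range.mp hj)
    rw [hcon, Finset.sum_tsub_distrib _ (fun j _ => hx_le j), hc_sum, hx_sum]
    omega

lemma split_merge {m : ℕ} {d : ℕ → ℕ} {k : ℕ} {A : ℕ → ℕ → ℕ} (hA : IsG (m+1) d k A) :
    splitA m (∑ j ∈ Finset.range m, A m j)
      (d m - ∑ j ∈ Finset.range m, A m j) (mergeA m A) = A := by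
  obtain ⟨f1, f2, -⟩ := merge_isG hA
  obtain ⟨hs, hd, hnc, hsupp, hdeg, hdm⟩ := hA
  set l := ∑ j ∈ Finset.range m, A m j with hldef
  have hrr : d m - l = A m (m+1) := by omega
  have hX : ∀ t, t < m → A t m = thrX m l (fun t => mergeA m A t m) t := by
    intro t htm
    apply thr_unique m l (fun t => A t m) (fun t => mergeA m A t m) _ _ _ htm
    · intro i hi
      show A i m ≤ mergeA m A i m
      rw [mergeA_im A hi]
      exact Nat.le_add_right _ _
    · rw [hldef]
      exact Finset.sum_congr rfl fun j _ => hs j m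
    · intro i j hij hjm hpos
      show A j m = mergeA m A j m
      rw [mergeA_im A hjm]
      have hpos' : 0 < A i m := hpos
      rcases hnc i j m (m+1) hij hjm (by omega) with h | h
      · omega
      · omega
  funext i j
  by_cases hi : i < m <;> by_cases hj : j < m
  · rw [splitA_lt _ hi hj, mergeA_lt A hi hj]
  · by_cases hjm : j = m
    · rw [hjm, splitA_im _ hi, ← hX i hi]
    · by_cases hjv : j = m + 1
      · rw [hjv, splitA_iv _ hi, ← hX i hi, mergeA_im A hi]
        omega
      · rw [splitA_zero _ (by omega)]
        rw [hsupp i j (by omega)]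
  · by_cases him : i = m
    · rw [him, splitA_mi _ hj, ← hX j hj, hs j m]
    · by_cases hiv : i = m + 1
      · rw [hiv, splitA_vi _ hj, ← hX j hj, mergeA_im A hj, hs j (m+1)]
        omega
      · rw [splitA_zero _ (by omega), hs, hsupp j i (by omega)]
  · by_cases him : i = m
    · by_cases hjm : j = m
      · rw [him, hjm, splitA_zero _ (by omega), hd m]
      · by_cases hjv : j = m + 1
        · rw [him, hjv, splitA_mv, hrr]
        · rw [splitA_zero _ (by omega), hsupp i j (by omega)]
    · by_cases hiv : i = m + 1
      · by_cases hjm : j = m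
        · rw [hiv, hjm, splitA_vm, hrr, hs m (m+1)]
        · by_cases hjv : j = m + 1
          · rw [hiv, hjv, splitA_zero _ (by omega), hd]
          · rw [splitA_zero _ (by omega), hsupp i j (by omega)]
      · rw [splitA_zero _ (by omega), hs, hsupp j i (by omega)]

lemma merge_split {m : ℕ} {d : ℕ → ℕ} {k l : ℕ} {B : ℕ → ℕ → ℕ}
    (hB : IsG m d (k + 2 * l - d m) B) (hl : l ≤ d m) (hlk : d m ≤ k + l) :
    mergeA m (splitA m l (d m - l) B) = B ∧
    (∑ j ∈ Finset.range m, splitA m l (d m - l) B m j) = l := by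
  obtain ⟨hs, hd, hnc, hsupp, hdeg, hdm⟩ := hB
  have hc_sum : ∑ t ∈ Finset.range m, B t m = k + 2 * l - d m := by
    rw [Finset.sum_range_succ] at hdm
    rw [hd m, add_zero] at hdm
    rw [← hdm]
    exact Finset.sum_congr rfl fun j _ => (hs j m).symm ▸ rfl
  have hx_sum : ∑ t ∈ Finset.range m, thrX m l (fun t => B t m) t = l :=
    thrX_sum m l (fun t => B t m)
      ((by omega : l ≤ ∑ t ∈ Finset.range m, B t m) : _)
  have hx_le : ∀ i, thrX m l (fun t => B t m) i ≤ B i m := fun i => thrX_le m l _ i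
  constructor
  · funext i j
    by_cases hi : i < m <;> by_cases hj : j < m
    · rw [mergeA_lt _ hi hj, splitA_lt B hi hj]
    · by_cases hjm : j = m
      · rw [hjm, mergeA_im _ hi, splitA_im B hi, splitA_iv B hi]
        have := hx_le i
        omega
      · rw [mergeA_zero _ (by omega), hsupp i j (by omega)]
    · by_cases him : i = m
      · rw [him, mergeA_mi _ hj, splitA_mi B hj, splitA_vi B hj, hs m j]
        have := hx_le j
        omega
      · rw [mergeA_zero _ (by omega), hs, hsupp j i (by omega)]
    · by_cases hij : i = m ∧ j = m
      · rw [mergeA_zero _ (by omega), hij.1, hij.2, hd]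
      · rcases Nat.lt_or_ge m j with h | h
        · rw [mergeA_zero _ (by omega), hsupp i j h]
        · rw [mergeA_zero _ (by omega), hs, hsupp j i (by omega)]
  · have hcon : ∑ j ∈ Finset.range m, splitA m l (d m - l) B m j
        = ∑ j ∈ Finset.range m, thrX m l (fun t => B t m) j :=
      Finset.sum_congr rfl fun j hj => splitA_mi B (Finset.mem_range.mp hj)
    rw [hcon, hx_sum]

lemma nat_card_sigma {n : ℕ} (β : Fin n → Type) [inst : ∀ i, Finite (β i)] :
    Nat.card (Σ i, β i) = ∑ i, Nat.card (β i) := by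
  have : ∀ i, Fintype (β i) := fun i => Fintype.ofFinite (β i)
  simp only [Nat.card_eq_fintype_card]
  exact Fintype.card_sigma

lemma gcount_succ (m : ℕ) (d : ℕ → ℕ) (k : ℕ) :
    gcount (m+1) d k = ∑ l ∈ Finset.range (d m + 1),
      if d m ≤ k + l then gcount m d (k + 2*l - d m) else 0 := by
  classical
  set f : {A : ℕ → ℕ → ℕ // IsG (m+1) d k A} → Fin (d m + 1) :=
    fun A => ⟨∑ j ∈ Finset.range m, A.1 m j, by
      have h := (merge_isG A.2).1
      omega⟩ with hf
  have hfiber : ∀ l : Fin (d m + 1),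
      Nat.card {A : {A : ℕ → ℕ → ℕ // IsG (m+1) d k A} // f A = l}
        = if d m ≤ k + (l : ℕ) then gcount m d (k + 2*(l : ℕ) - d m) else 0 := by
    intro l
    by_cases hcond : d m ≤ k + (l : ℕ)
    · rw [if_pos hcond, gcount]
      apply Nat.card_congr
      refine ⟨?_, ?_, ?_, ?_⟩
      · rintro ⟨⟨A, hA⟩, hfA⟩
        refine ⟨mergeA m A, ?_⟩
        have h3 := (merge_isG hA).2.2
        have hval : (∑ j ∈ Finset.range m, A m j) = (l : ℕ) := by
          have := congrArg Fin.val hfA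
          simpa [hf] using this
        rwa [hval] at h3
      · rintro ⟨B, hB⟩
        refine ⟨⟨splitA m (l : ℕ) (d m - (l : ℕ)) B,
          split_isG hB (by omega) hcond⟩, ?_⟩
        have := (merge_split hB (by omega) hcond).2
        simp only [hf]
        exact Fin.ext (by simpa using this)
      · rintro ⟨⟨A, hA⟩, hfA⟩
        have hval : (∑ j ∈ Finset.range m, A m j) = (l : ℕ) := by
          have := congrArg Fin.val hfA
          simpa [hf] using this
        apply Subtype.ext
        apply Subtype.ext
        show splitA m (l : ℕ) (d m - (l : ℕ)) (mergeA m A) = A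
        rw [← hval]
        exact split_merge hA
      · rintro ⟨B, hB⟩
        apply Subtype.ext
        show mergeA m (splitA m (l : ℕ) (d m - (l : ℕ)) B) = B
        exact (merge_split hB (by omega) hcond).1
    · rw [if_neg hcond]
      rw [Nat.card_eq_zero]
      left
      constructor
      rintro ⟨⟨A, hA⟩, hfA⟩
      have h1 := (merge_isG hA).1
      have h2 := (merge_isG hA).2.1
      have hval : (∑ j ∈ Finset.range m, A m j) = (l : ℕ) := by
        have := congrArg Fin.val hfA
        simpa [hf] using this
      omega
  calc gcount (m+1) d k
      = Nat.card (Σ l : Fin (d m + 1), {A : {A : ℕ → ℕ → ℕ // IsG (m+1) d k A} // f A = l}) := by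
        rw [gcount]
        exact Nat.card_congr (Equiv.sigmaFiberEquiv f).symm
    _ = ∑ l : Fin (d m + 1),
          Nat.card {A : {A : ℕ → ℕ → ℕ // IsG (m+1) d k A} // f A = l} :=
        nat_card_sigma _
    _ = ∑ l : Fin (d m + 1),
          (if d m ≤ k + (l : ℕ) then gcount m d (k + 2*(l : ℕ) - d m) else 0) :=
        Finset.sum_congr rfl fun l _ => hfiber l
    _ = ∑ l ∈ Finset.range (d m + 1),
          (if d m ≤ k + l then gcount m d (k + 2*l - d m) else 0) :=
        Fin.sum_univ_eq_sum_range
          (fun l => if d m ≤ k + l then gcount m d (k + 2*l - d m) else 0) (d m + 1)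

lemma one_laurent_apply (n : ℤ) :
    (1 : LaurentPolynomial ℤ).coeff n = if n = 0 then 1 else 0 := by
  rw [AddMonoidAlgebra.one_def, AddMonoidAlgebra.coeff_single, Finsupp.single_apply]
  simp [eq_comm]

lemma gcount_char (d : ℕ → ℕ) (m : ℕ) : ∀ k : ℕ, (gcount m d k : ℤ)
    = (∏ i ∈ Finset.range m, chRho (d i)).coeff (k : ℤ)
      - (∏ i ∈ Finset.range m, chRho (d i)).coeff ((k : ℤ) + 2) := by
  induction m with
  | zero =>
    intro k
    rw [gcount_zero]
    simp only [Finset.range_zero, Finset.prod_empty, one_laurent_apply]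
    rcases eq_or_ne k 0 with hk | hk
    · subst hk; norm_num
    · rw [if_neg hk, if_neg (by exact_mod_cast hk), if_neg (by omega)]
      norm_num
  | succ m ih =>
    intro k
    rw [Finset.prod_range_succ, gcount_succ,
      psi_step (∏ i ∈ Finset.range m, chRho (d i)) (symm_prod_chRho m d) (d m) k]
    push_cast
    refine Finset.sum_congr rfl fun l _ => ?_
    rcases le_or_gt (d m) (k + l) with h | h
    · rw [if_pos h, if_pos h, ih (k + 2*l - d m)]
    · rw [if_neg (by omega), if_neg (by omega)]

lemma row_zero {m : ℕ} {d : ℕ → ℕ} {B : ℕ → ℕ → ℕ} (hB : IsG m d 0 B) :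
    ∀ i j, m ≤ i ∨ m ≤ j → B i j = 0 := by
  obtain ⟨hs, hd, hnc, hsupp, hdeg, hdm⟩ := hB
  have hrow : ∀ j, B m j = 0 := by
    intro j
    rcases Nat.lt_or_ge m j with hj | hj
    · exact hsupp m j hj
    · exact (Finset.sum_eq_zero_iff.mp hdm) j (Finset.mem_range.mpr (by omega))
  intro i j hij
  rcases hij with hi | hj
  · rcases Nat.eq_or_lt_of_le hi with hi' | hi'
    · rw [← hi']; exact hrow j
    · rw [hs]; exact hsupp j i hi'
  · rcases Nat.eq_or_lt_of_le hj with hj' | hj'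
    · rw [hs, ← hj']; exact hrow i
    · exact hsupp i j hj'

def extF (m : ℕ) (A : Fin m → Fin m → ℕ) : ℕ → ℕ → ℕ :=
  fun i j => if h : i < m ∧ j < m then A ⟨i, h.1⟩ ⟨j, h.2⟩ else 0

lemma extF_pos {m : ℕ} (A : Fin m → Fin m → ℕ) {i j : ℕ} (hi : i < m) (hj : j < m) :
    extF m A i j = A ⟨i, hi⟩ ⟨j, hj⟩ := by
  simp only [extF]
  rw [dif_pos ⟨hi, hj⟩]

lemma extF_neg {m : ℕ} (A : Fin m → Fin m → ℕ) {i j : ℕ} (h : ¬(i < m ∧ j < m)) :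
    extF m A i j = 0 := by
  simp only [extF]
  rw [dif_neg h]

lemma ncCount_eq_gcount (m : ℕ) (d : Fin m → ℕ) :
    ncCount m d = gcount m (fun i => if h : i < m then d ⟨i, h⟩ else 0) 0 := by
  classical
  rw [ncCount, gcount]
  apply Nat.card_congr
  refine ⟨fun A => ⟨extF m A.1, ?_⟩,
    fun B => ⟨fun i j => B.1 i j, ?_, ?_, ?_, ?_⟩, ?_, ?_⟩
  · obtain ⟨A, h1, h2, h3, h4⟩ := A
    refine ⟨?_, ?_, ?_, ?_, ?_, ?_⟩
    · intro i j
      by_cases h : i < m ∧ j < m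
      · rw [extF_pos A h.1 h.2, extF_pos A h.2 h.1]
        exact h1 _ _
      · rw [extF_neg A h, extF_neg A (by omega)]
    · intro i
      by_cases h : i < m
      · rw [extF_pos A h h]; exact h2 _
      · rw [extF_neg A (by omega)]
    · intro a b c e hab hbc hce
      by_cases he : e < m
      · rw [extF_pos A (by omega) (by omega), extF_pos A (by omega) he]
        exact h3 ⟨a, by omega⟩ ⟨b, by omega⟩ ⟨c, by omega⟩ ⟨e, by omega⟩ hab hbc hce
      · right; exact extF_neg A (by omega)
    · intro i j hj
      exact extF_neg A (by omega)
    · intro i hi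
      rw [Finset.sum_range_succ, extF_neg A (by omega), add_zero]
      have hsum : ∑ j ∈ Finset.range m, extF m A i j = ∑ j : Fin m, A ⟨i, hi⟩ j := by
        rw [← Fin.sum_univ_eq_sum_range (fun j => extF m A i j) m]
        refine Finset.sum_congr rfl fun j _ => ?_
        rw [extF_pos A hi j.2]
      rw [hsum, h4 ⟨i, hi⟩]
      simp [hi]
    · apply Finset.sum_eq_zero
      intro j _
      exact extF_neg A (by omega)
  · intro i j
    exact B.2.1 i j
  · intro i
    exact B.2.2.1 i
  · intro a b c e hab hbc hce
    exact B.2.2.2.1 a b c e hab hbc hce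
  · intro i
    obtain ⟨B, hB⟩ := B
    have hdeg := hB.2.2.2.2.1 i i.2
    rw [Finset.sum_range_succ] at hdeg
    rw [row_zero hB i m (Or.inr le_rfl), add_zero] at hdeg
    rw [← Fin.sum_univ_eq_sum_range (fun j => B (i : ℕ) j) m] at hdeg
    rw [show (∑ j : Fin m, B (i : ℕ) (j : ℕ)) = ∑ j : Fin m, B (i : ℕ) (j : ℕ) from rfl] at hdeg
    rw [hdeg]
    simp
  · rintro ⟨A, hA⟩
    apply Subtype.ext
    funext i j
    show extF m A (i : ℕ) (j : ℕ) = A i j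
    rw [extF_pos A i.2 j.2]
  · rintro ⟨B, hB⟩
    apply Subtype.ext
    funext i j
    show extF m (fun i j : Fin m => B (i : ℕ) (j : ℕ)) i j = B i j
    by_cases h : i < m ∧ j < m
    · rw [extF_pos _ h.1 h.2]
    · rw [extF_neg _ h, row_zero hB i j (by omega)]

theorem stmt12 (m : ℕ) (d : Fin m → ℕ) :
    (ncCount m d : ℤ) =
      (∏ i : Fin m, chRho (d i)).coeff 0 - (∏ i : Fin m, chRho (d i)).coeff 2 := by
  classical
  have key := gcount_char (fun i => if h : i < m then d ⟨i, h⟩ else 0) m 0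
  rw [ncCount_eq_gcount m d, key]
  have hprod : (∏ i : Fin m, chRho (d i))
      = ∏ i ∈ Finset.range m, chRho ((fun i => if h : i < m then d ⟨i, h⟩ else 0) i) := by
    rw [← Fin.prod_univ_eq_prod_range]
    refine Finset.prod_congr rfl fun i _ => ?_
    congr 1
    simp
  rw [hprod]
  norm_num
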